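/- Let H be a standard Hanner polytope in ℝⁿ with associated affine subspaces A_F, and for j = 1,…,n let E_j = H ∩ (e_j + e_j^⊥), which is a face of H with centroid e_j. Then aff(E_j) = e_j + span{e_i : i ≠ j, e_i + e_j ∈ H} and A_{E_j} = e_j + span{e_i : i ≠ j, e_i + e_j ∉ H}. -/

import Mathlib

open MeasureTheory Set Submodule
open scoped RealInnerProductSpace Pointwise Classical NNReal ENNReal

noncomputable section

abbrev Euc (n : ℕ) := EuclideanSpace ℝ (Fin n)

variable {n : ℕ}

/-- A convex body: a compact convex set with nonempty interior. -/
def IsConvexBody (K : Set (Euc n)) : Prop :=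
  Convex ℝ K ∧ IsCompact K ∧ (interior K).Nonempty

/-- The polar of a set. -/
def polarSet (K : Set (Euc n)) : Set (Euc n) := {y | ∀ x ∈ K, ⟪x, y⟫ ≤ 1}

/-- Volume (as a real number). -/
def vol (A : Set (Euc n)) : ℝ := (volume A).toReal

/-- The volume product of a symmetric convex body. -/
def volProd (K : Set (Euc n)) : ℝ := vol K * vol (polarSet K)

/-- Banach–Mazur distance between symmetric convex bodies. -/
def bmDist (K L : Set (Euc n)) : ℝ :=
  sInf {c : ℝ | 1 ≤ c ∧ ∃ T : (Euc n) ≃ₗ[ℝ] (Euc n), L ⊆ T '' K ∧ T '' K ⊆ c • L}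

/-- The dimension of a set: dimension of the linear span of `A - A`. -/
def setDim (A : Set (Euc n)) : ℕ :=
  Module.finrank ℝ (Submodule.span ℝ (A - A) : Submodule ℝ (Euc n))

/-- Dimension with the convention `dim ∅ = -1`. -/
def edim (A : Set (Euc n)) : ℤ := if A = ∅ then -1 else (setDim A : ℤ)

/-- ℓ1-sum, with the convention `A ⊕₁ ∅ = A`, `∅ ⊕₁ B = B`. -/
def l1Sum (A B : Set (Euc n)) : Set (Euc n) :=
  if A = ∅ then B else if B = ∅ then A else convexHull ℝ (A ∪ B)

/-- The centroid of a set, computed with respect to the Hausdorff measure of dimension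
`setDim A` (this is the Lebesgue measure on the affine hull for convex sets). -/
def centroid (A : Set (Euc n)) : Euc n :=
  ((μH[(setDim A : ℝ)] A).toReal)⁻¹ • ∫ x in A, x ∂(μH[(setDim A : ℝ)])

/-- `F` is a (proper, nonempty) face of `P` cut out by a supporting hyperplane whose normal
vector lies in `V`. -/
def IsFaceIn (V : Submodule ℝ (Euc n)) (P F : Set (Euc n)) : Prop :=
  ∃ (u : Euc n) (b : ℝ), u ∈ V ∧ u ≠ 0 ∧ (∀ x ∈ P, ⟪x, u⟫ ≤ b) ∧
    (∃ x ∈ P, ⟪x, u⟫ = b) ∧ F = {x ∈ P | ⟪x, u⟫ = b} ∧ F ≠ P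

/-- `F` is a face of `P` (cut out by a supporting hyperplane). -/
def IsFaceOf (P F : Set (Euc n)) : Prop := IsFaceIn ⊤ P F

/-- The polar of `K` computed inside the subspace `V`. -/
def polarIn (V : Submodule ℝ (Euc n)) (K : Set (Euc n)) : Set (Euc n) :=
  {y | y ∈ V ∧ ∀ x ∈ K, ⟪x, y⟫ ≤ 1}

/-- The dual face of a face `F` of `P`, computed inside the subspace `V`. -/
def dualFaceIn (V : Submodule ℝ (Euc n)) (P F : Set (Euc n)) : Set (Euc n) :=
  {y ∈ polarIn V P | ∀ x ∈ F, ⟪x, y⟫ = 1}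

/-- The dual face `F* = {y ∈ P° : ⟨x,y⟩ = 1 ∀ x ∈ F}`. -/
def dualFace (P F : Set (Euc n)) : Set (Euc n) := dualFaceIn ⊤ P F

/-- A convex polytope: convex hull of finitely many points. -/
def IsPolytope (P : Set (Euc n)) : Prop := ∃ S : Finset (Euc n), P = convexHull ℝ (S : Set (Euc n))

/-- A flag over `P`: an increasing chain of faces `F⁰ ⊂ F¹ ⊂ ⋯ ⊂ F^{n-1}` with `dim F^k = k`. -/
def IsFlagOf (P : Set (Euc n)) (𝔽 : Fin n → Set (Euc n)) : Prop :=
  (∀ k, IsFaceOf P (𝔽 k)) ∧ (∀ k : Fin n, setDim (𝔽 k) = (k : ℕ)) ∧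
  (∀ k l : Fin n, k ≤ l → 𝔽 k ⊆ 𝔽 l)

/-- The volume of the simplex `Z_𝔽 = conv{0, z_{F⁰}, …, z_{F^{n-1}}}`. -/
def flagVol (Z : Set (Euc n) → Euc n) (𝔽 : Fin n → Set (Euc n)) : ℝ :=
  vol (convexHull ℝ (insert (0 : Euc n) (Set.range fun k => Z (𝔽 k))))

/-- The volume function `V(Z) = Σ_𝔽 |Z_𝔽|`, sum over all flags of `P`. -/
def Vfun (P : Set (Euc n)) (Z : Set (Euc n) → Euc n) : ℝ :=
  ∑ᶠ (𝔽 : Fin n → Set (Euc n)) (_ : IsFlagOf P 𝔽), flagVol Z 𝔽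

/-- The partial volume function: sum over all flags of `P` containing the face `G`. -/
def VfunG (P G : Set (Euc n)) (Z : Set (Euc n) → Euc n) : ℝ :=
  ∑ᶠ (𝔽 : Fin n → Set (Euc n)) (_ : IsFlagOf P 𝔽 ∧ G ∈ Set.range 𝔽), flagVol Z 𝔽

/-- `x_F` is the point of `(t_F • A_F) ∩ ∂K` nearest to `c_F`, where `t_F • A_F` is
tangent to `K`. -/
def TangentXPoint (K AF : Set (Euc n)) (cF : Euc n) (tF : ℝ) (xF : Euc n) : Prop :=
  0 < tF ∧ (tF • AF) ∩ interior K = ∅ ∧ xF ∈ (tF • AF) ∩ frontier K ∧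
  ∀ z ∈ (tF • AF) ∩ frontier K, dist cF xF ≤ dist cF z

/-- The pair of points `x_F, y_F` constructed from `K`, `A_F`, `c_F`. -/
def TangentPointAt (K AF : Set (Euc n)) (cF : Euc n) (tF : ℝ) (xF yF : Euc n) : Prop :=
  TangentXPoint K AF cF tF xF ∧ yF = tF • cF

/-- Conditions (a) and (b) for the affine subspace `A F` at a face `F` of `body`. -/
def GoodAt (body : Set (Euc n)) (A : Set (Euc n) → Set (Euc n)) (c : Set (Euc n) → Euc n)
    (F : Set (Euc n)) : Prop :=
  (∃ S : AffineSubspace ℝ (Euc n), A F = (S : Set (Euc n))) ∧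
  A F ∩ body = {c F} ∧ c F ∈ intrinsicInterior ℝ F ∧
  setDim (A F) + setDim F + 1 = n

/-- Conditions (a), (b), (c) for the family of affine subspaces `A_F` attached to the faces
of `P` and of `P°`. -/
def GoodFamily (P : Set (Euc n)) (A : Set (Euc n) → Set (Euc n)) (c : Set (Euc n) → Euc n) : Prop :=
  (∀ F, IsFaceOf P F → GoodAt P A c F ∧
      ∀ x ∈ A F, ∀ y ∈ A (dualFace P F), ⟪x, y⟫ = 1) ∧
  (∀ G, IsFaceOf (polarSet P) G → GoodAt (polarSet P) A c G)

/-- Hanner polytopes: symmetric segments, closed under ℓ1 and ℓ∞ sums of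
linearly independent summands. -/
inductive IsHanner : Set (Euc n) → Prop
  | seg (x : Euc n) (hx : x ≠ 0) : IsHanner (segment ℝ (-x) x)
  | l1 {A B : Set (Euc n)} (hA : IsHanner A) (hB : IsHanner B)
      (hspan : Submodule.span ℝ A ⊓ Submodule.span ℝ B = ⊥) :
      IsHanner (convexHull ℝ (A ∪ B))
  | linf {A B : Set (Euc n)} (hA : IsHanner A) (hB : IsHanner B)
      (hspan : Submodule.span ℝ A ⊓ Submodule.span ℝ B = ⊥) :
      IsHanner (A + B)

/-- The rules of Definition 4.1 defining `A` on the faces of the ℓ1-sum `H₁ ⊕₁ H₂` from the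
families `A₁, A₂` for `H₁, H₂`. -/
def L1Rules (H₁ H₂ : Set (Euc n)) (A₁ A₂ A : Set (Euc n) → Set (Euc n)) : Prop :=
  (∀ F₁, IsFaceIn (Submodule.span ℝ H₁) H₁ F₁ →
      A F₁ = A₁ F₁ + (Submodule.span ℝ H₂ : Set (Euc n))) ∧
  (∀ F₂, IsFaceIn (Submodule.span ℝ H₂) H₂ F₂ →
      A F₂ = (Submodule.span ℝ H₁ : Set (Euc n)) + A₂ F₂) ∧
  (∀ F₁ F₂, IsFaceIn (Submodule.span ℝ H₁) H₁ F₁ → IsFaceIn (Submodule.span ℝ H₂) H₂ F₂ →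
      A (convexHull ℝ (F₁ ∪ F₂)) =
        ((setDim F₁ + 1 : ℝ) / (setDim F₁ + setDim F₂ + 2)) • A₁ F₁ +
        ((setDim F₂ + 1 : ℝ) / (setDim F₁ + setDim F₂ + 2)) • A₂ F₂)

/-- The rules of Definition 4.1 defining `A` on the faces of the ℓ∞-sum `H₁ ⊕∞ H₂` from the
families `A₁, A₂` for `H₁, H₂`. -/
def LInfRules (H₁ H₂ : Set (Euc n)) (A₁ A₂ A : Set (Euc n) → Set (Euc n)) : Prop :=
  (∀ F₁, IsFaceIn (Submodule.span ℝ H₁) H₁ F₁ → A (F₁ + H₂) = A₁ F₁) ∧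
  (∀ F₂, IsFaceIn (Submodule.span ℝ H₂) H₂ F₂ → A (H₁ + F₂) = A₂ F₂) ∧
  (∀ F₁ F₂, IsFaceIn (Submodule.span ℝ H₁) H₁ F₁ → IsFaceIn (Submodule.span ℝ H₂) H₂ F₂ →
      A (F₁ + F₂) = A₁ F₁ + A₂ F₂ +
        (Submodule.span ℝ
          {(((setDim H₁ : ℝ) - setDim F₁)⁻¹ • centroid F₁ -
            ((setDim H₂ : ℝ) - setDim F₂)⁻¹ • centroid F₂)} : Set (Euc n)))

/-- A Hanner polytope `H` together with its recursively defined family `A` of affine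
subspaces, paired with the (relative) polar Hanner polytope `H'` and its family `A'`. -/
inductive HannerRep :
    Set (Euc n) → (Set (Euc n) → Set (Euc n)) → Set (Euc n) → (Set (Euc n) → Set (Euc n)) → Prop
  | seg (x : Euc n) (hx : x ≠ 0) (A A' : Set (Euc n) → Set (Euc n))
      (hA1 : A {x} = {x}) (hA2 : A {-x} = {-x})
      (hA'1 : A' {(‖x‖ ^ 2)⁻¹ • x} = {(‖x‖ ^ 2)⁻¹ • x})
      (hA'2 : A' {-((‖x‖ ^ 2)⁻¹ • x)} = {-((‖x‖ ^ 2)⁻¹ • x)}) :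
      HannerRep (segment ℝ (-x) x) A
        (segment ℝ (-((‖x‖ ^ 2)⁻¹ • x)) ((‖x‖ ^ 2)⁻¹ • x)) A'
  | l1 {H₁ H₂ H₁' H₂' : Set (Euc n)} {A₁ A₂ A₁' A₂' A A' : Set (Euc n) → Set (Euc n)}
      (h₁ : HannerRep H₁ A₁ H₁' A₁') (h₂ : HannerRep H₂ A₂ H₂' A₂')
      (horth : Submodule.span ℝ (H₂ ∪ H₂') ≤ (Submodule.span ℝ (H₁ ∪ H₁'))ᗮ)
      (hA : L1Rules H₁ H₂ A₁ A₂ A) (hA' : LInfRules H₁' H₂' A₁' A₂' A') :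
      HannerRep (convexHull ℝ (H₁ ∪ H₂)) A (H₁' + H₂') A'
  | linf {H₁ H₂ H₁' H₂' : Set (Euc n)} {A₁ A₂ A₁' A₂' A A' : Set (Euc n) → Set (Euc n)}
      (h₁ : HannerRep H₁ A₁ H₁' A₁') (h₂ : HannerRep H₂ A₂ H₂' A₂')
      (horth : Submodule.span ℝ (H₂ ∪ H₂') ≤ (Submodule.span ℝ (H₁ ∪ H₁'))ᗮ)
      (hA : LInfRules H₁ H₂ A₁ A₂ A) (hA' : L1Rules H₁' H₂' A₁' A₂' A') :
      HannerRep (H₁ + H₂) A (convexHull ℝ (H₁' ∪ H₂')) A'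

/-- The standard symmetric segment `[-e_j, e_j]`. -/
def stdSeg (j : Fin n) : Set (Euc n) :=
  segment ℝ (-(EuclideanSpace.single j (1 : ℝ))) (EuclideanSpace.single j (1 : ℝ))

/-- A standard Hanner polytope `H` (built from the segments `[-e_j, e_j]`) together with its
recursively defined family `A` of affine subspaces, paired with the polar standard Hanner
polytope `H'` and its family `A'`. -/
inductive StdHannerRep :
    Set (Euc n) → (Set (Euc n) → Set (Euc n)) → Set (Euc n) → (Set (Euc n) → Set (Euc n)) → Prop
  | seg (j : Fin n) (A A' : Set (Euc n) → Set (Euc n))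
      (hA1 : A {EuclideanSpace.single j (1 : ℝ)} = {EuclideanSpace.single j (1 : ℝ)})
      (hA2 : A {-EuclideanSpace.single j (1 : ℝ)} = {-EuclideanSpace.single j (1 : ℝ)})
      (hA'1 : A' {EuclideanSpace.single j (1 : ℝ)} = {EuclideanSpace.single j (1 : ℝ)})
      (hA'2 : A' {-EuclideanSpace.single j (1 : ℝ)} = {-EuclideanSpace.single j (1 : ℝ)}) :
      StdHannerRep (stdSeg j) A (stdSeg j) A'
  | l1 {H₁ H₂ H₁' H₂' : Set (Euc n)} {A₁ A₂ A₁' A₂' A A' : Set (Euc n) → Set (Euc n)}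
      (h₁ : StdHannerRep H₁ A₁ H₁' A₁') (h₂ : StdHannerRep H₂ A₂ H₂' A₂')
      (hspan : Submodule.span ℝ (H₁ ∪ H₁') ⊓ Submodule.span ℝ (H₂ ∪ H₂') = ⊥)
      (hA : L1Rules H₁ H₂ A₁ A₂ A) (hA' : LInfRules H₁' H₂' A₁' A₂' A') :
      StdHannerRep (convexHull ℝ (H₁ ∪ H₂)) A (H₁' + H₂') A'
  | linf {H₁ H₂ H₁' H₂' : Set (Euc n)} {A₁ A₂ A₁' A₂' A A' : Set (Euc n) → Set (Euc n)}
      (h₁ : StdHannerRep H₁ A₁ H₁' A₁') (h₂ : StdHannerRep H₂ A₂ H₂' A₂')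
      (hspan : Submodule.span ℝ (H₁ ∪ H₁') ⊓ Submodule.span ℝ (H₂ ∪ H₂') = ⊥)
      (hA : LInfRules H₁ H₂ A₁ A₂ A) (hA' : L1Rules H₁' H₂' A₁' A₂' A') :
      StdHannerRep (H₁ + H₂) A (convexHull ℝ (H₁' ∪ H₂')) A'

/-- `H` is a standard Hanner polytope. -/
def IsStdHanner (H : Set (Euc n)) : Prop :=
  ∃ (A : Set (Euc n) → Set (Euc n)) (H' : Set (Euc n)) (A' : Set (Euc n) → Set (Euc n)),
    StdHannerRep H A H' A'

/-- The unit cube `B∞ⁿ = [-1,1]ⁿ`. -/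
def cube (n : ℕ) : Set (Euc n) := {x | ∀ i, |x i| ≤ 1}

/-- The unit cross-polytope `B₁ⁿ`. -/
def crossPolytope (n : ℕ) : Set (Euc n) := {x | ∑ i, |x i| ≤ 1}

/-- The coordinate subspace `ℝ^(v) = span{e_j : j ∈ supp v}`. -/
def suppSpan (v : Euc n) : Submodule ℝ (Euc n) :=
  Submodule.span ℝ {x : Euc n | ∃ j, v j ≠ 0 ∧ x = EuclideanSpace.single j (1 : ℝ)}

/-- Orthogonal projection of a set onto a subspace. -/
def projSet (V : Submodule ℝ (Euc n)) (K : Set (Euc n)) : Set (Euc n) :=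
  (fun x => (orthogonalProjection V x : Euc n)) '' K

end

noncomputable section
variable {n : ℕ}

namespace HannerAux

/-- Standard basis vector. -/
def eb {n : ℕ} (i : Fin n) : Euc n := EuclideanSpace.single i (1 : ℝ)

lemma eb_apply (i k : Fin n) : eb i k = if k = i then 1 else 0 :=
  EuclideanSpace.single_apply i 1 k

@[simp] lemma eb_apply_self (i : Fin n) : eb i i = 1 := by simp [eb_apply]

lemma eb_apply_ne {i k : Fin n} (h : k ≠ i) : eb i k = 0 := by simp [eb_apply, h]

lemma inner_eb (x : Euc n) (j : Fin n) : ⟪x, eb j⟫ = x j := by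
  rw [eb, EuclideanSpace.inner_single_right]; simp

@[simp] lemma add_apply (x y : Euc n) (i : Fin n) : (x + y) i = x i + y i := rfl
@[simp] lemma sub_apply (x y : Euc n) (i : Fin n) : (x - y) i = x i - y i := rfl
@[simp] lemma neg_apply (x : Euc n) (i : Fin n) : (-x) i = -(x i) := rfl
@[simp] lemma smul_apply (c : ℝ) (x : Euc n) (i : Fin n) : (c • x) i = c * x i := rfl
@[simp] lemma zero_apply (i : Fin n) : (0 : Euc n) i = 0 := rfl

lemma sum_apply {ι : Type*} (s : Finset ι) (f : ι → Euc n) (i : Fin n) :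
    (∑ k ∈ s, f k) i = ∑ k ∈ s, f k i := by
  classical
  induction s using Finset.induction with
  | empty => simp
  | @insert _ _ h ih => rw [Finset.sum_insert h, Finset.sum_insert h, add_apply, ih]

lemma eb_ne_zero (i : Fin n) : eb i ≠ 0 := by
  intro h
  have := congrFun (congrArg (fun (x : Euc n) => (x : Fin n → ℝ)) h) i
  simp at this

lemma euc_eq_sum (x : Euc n) : x = ∑ i, x i • eb i := by
  ext i
  rw [sum_apply]
  simp [eb_apply, Finset.sum_ite_eq' Finset.univ i (fun k => x k)]

/-- Membership in the span of a set of basis vectors. -/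
lemma mem_span_eb {P : Fin n → Prop} {y : Euc n} :
    y ∈ span ℝ {x : Euc n | ∃ i, P i ∧ x = eb i} ↔ ∀ i, ¬ P i → y i = 0 := by
  constructor
  · intro hy
    have : span ℝ {x : Euc n | ∃ i, P i ∧ x = eb i} ≤
        LinearMap.ker (LinearMap.pi (fun i : {i : Fin n // ¬ P i} =>
          (EuclideanSpace.projₗ (𝕜 := ℝ) (i : Fin n)))) := by
      rw [span_le]
      rintro x ⟨i, hPi, rfl⟩
      simp only [SetLike.mem_coe, LinearMap.mem_ker]
      funext k
      simp only [LinearMap.pi_apply, PiLp.projₗ_apply]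
      exact eb_apply_ne (fun h => k.2 (h ▸ hPi))
    intro i hi
    have := this hy
    simpa using congrFun (LinearMap.mem_ker.mp this) ⟨i, hi⟩
  · intro h
    rw [euc_eq_sum y]
    refine Submodule.sum_mem _ (fun i _ => ?_)
    by_cases hPi : P i
    · exact Submodule.smul_mem _ _ (Submodule.subset_span ⟨i, hPi, rfl⟩)
    · rw [h i hPi, zero_smul]; exact Submodule.zero_mem _

/-- Sign flip of a set of coordinates, as a linear map. -/
def flipL (s : Fin n → Bool) : Euc n →ₗ[ℝ] Euc n where
  toFun x := WithLp.toLp 2 (fun i => if s i then -x i else x i)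
  map_add' x y := by ext i; by_cases h : s i <;> simp [h] <;> ring
  map_smul' c x := by ext i; by_cases h : s i <;> simp [h] <;> ring

lemma flipL_apply (s : Fin n → Bool) (x : Euc n) (i : Fin n) :
    flipL s x i = if s i then -x i else x i := rfl

lemma mem_stdSeg {j : Fin n} {x : Euc n} :
    x ∈ stdSeg j ↔ |x j| ≤ 1 ∧ ∀ i, i ≠ j → x i = 0 := by
  constructor
  · rintro ⟨u, v, hu, hv, huv, rfl⟩
    constructor
    · have h : (u • -eb j + v • eb j) j = v - u := by simp [eb]; ring
      show |(u • -eb j + v • eb j) j| ≤ 1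
      rw [h]
      calc |v - u| ≤ |v| + |u| := abs_sub _ _
        _ = 1 := by rw [abs_of_nonneg hu, abs_of_nonneg hv]; linarith
    · intro i hij
      show (u • -eb j + v • eb j) i = 0
      simp [eb, eb_apply_ne hij, hij]
  · rintro ⟨h1, h2⟩
    have hx : x = x j • eb j := by
      ext i
      by_cases hij : i = j
      · subst hij; simp
      · simp [eb_apply_ne hij, h2 i hij]
    refine ⟨(1 - x j) / 2, (1 + x j) / 2, ?_, ?_, by ring, ?_⟩
    · have := abs_le.mp h1; linarith [this.2]
    · have := abs_le.mp h1; linarith [this.1]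
    · rw [hx]
      show _ = x j • eb j
      ext i
      simp only [add_apply, smul_apply, neg_apply, eb_apply]
      by_cases hij : i = j <;> simp [hij] <;> ring

lemma eb_mem_stdSeg_iff {i j : Fin n} : eb i ∈ stdSeg j ↔ i = j := by
  rw [mem_stdSeg]
  constructor
  · rintro ⟨-, h⟩
    by_contra hij
    have := h i hij
    simp at this
  · rintro rfl
    refine ⟨by simp, fun i hij => eb_apply_ne hij⟩

/-- The key structural properties of standard Hanner polytopes. -/
structure Std (H : Set (Euc n)) : Prop where
  conv : Convex ℝ H
  comp : IsCompact H
  nonempty : H.Nonempty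
  flip : ∀ s, ∀ x ∈ H, flipL s x ∈ H
  bdd : ∀ x ∈ H, ∀ i, |x i| ≤ 1
  supp : ∀ x ∈ H, ∀ i, eb i ∉ H → x i = 0
  key : ∀ j, eb j ∈ H → ∀ x ∈ H, x j = 1 → ∀ i, i ≠ j → eb i + eb j ∉ H → x i = 0

lemma Std.neg_mem {H : Set (Euc n)} (h : Std H) {x : Euc n} (hx : x ∈ H) : -x ∈ H := by
  have := h.flip (fun _ => true) x hx
  have e : flipL (fun _ => true) x = -x := by ext i; simp [flipL_apply]
  rwa [e] at this

lemma Std.zero_mem {H : Set (Euc n)} (h : Std H) : (0 : Euc n) ∈ H := by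
  obtain ⟨x, hx⟩ := h.nonempty
  have h2 := h.conv hx (h.neg_mem hx) (by norm_num : (0:ℝ) ≤ 1/2) (by norm_num : (0:ℝ) ≤ 1/2)
    (by norm_num)
  have e : (1/2 : ℝ) • x + (1/2 : ℝ) • (-x) = 0 := by
    ext i
    show (1/2 : ℝ) * x i + (1/2 : ℝ) * (-(x i)) = 0
    ring
  rwa [e] at h2

/-- Flip of all coordinates except `j`, applied to a point with `x j = 1`. -/
lemma Std.reflect_mem {H : Set (Euc n)} (h : Std H) {x : Euc n} {j : Fin n}
    (hx : x ∈ H) (hxj : x j = 1) : (2 : ℝ) • eb j - x ∈ H := by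
  have := h.flip (fun i => decide (i ≠ j)) x hx
  have e : flipL (fun i => decide (i ≠ j)) x = (2 : ℝ) • eb j - x := by
    ext i
    by_cases hij : i = j
    · subst hij
      show _ = ((2:ℝ) • eb i - x) i
      simp [flipL_apply, hxj]
      norm_num
    · simp [flipL_apply, hij, eb_apply_ne hij]
  rwa [e] at this

lemma Std.sub_mem_of_add_mem {H : Set (Euc n)} (h : Std H) {i j : Fin n} (hij : i ≠ j)
    (hmem : eb i + eb j ∈ H) : eb j - eb i ∈ H := by
  have := h.flip (fun k => decide (k = i)) _ hmem
  have e : flipL (fun k => decide (k = i)) (eb i + eb j) = eb j - eb i := by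
    ext k
    by_cases hk : k = i
    · subst hk; simp [flipL_apply, eb_apply_ne hij]
    · simp [flipL_apply, hk, eb_apply_ne hk]
  rwa [e] at this

def Disj (H₁ H₂ : Set (Euc n)) : Prop := ∀ i : Fin n, eb i ∈ H₁ → eb i ∈ H₂ → False

lemma Disj.symm {H₁ H₂ : Set (Euc n)} (h : Disj H₁ H₂) : Disj H₂ H₁ :=
  fun i h2 h1 => h i h1 h2

lemma disj_of_span_inf {G₁ U₁ G₂ U₂ : Set (Euc n)}
    (hspan : Submodule.span ℝ U₁ ⊓ Submodule.span ℝ U₂ = ⊥)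
    (hs₁ : G₁ ⊆ U₁) (hs₂ : G₂ ⊆ U₂) : Disj G₁ G₂ := by
  intro i h1 h2
  have m1 : eb i ∈ Submodule.span ℝ U₁ := Submodule.subset_span (hs₁ h1)
  have m2 : eb i ∈ Submodule.span ℝ U₂ := Submodule.subset_span (hs₂ h2)
  have : eb i ∈ (⊥ : Submodule ℝ (Euc n)) := hspan ▸ Submodule.mem_inf.mpr ⟨m1, m2⟩
  exact eb_ne_zero i (Submodule.mem_bot ℝ |>.mp this)

lemma std_stdSeg (j : Fin n) : Std (stdSeg j) where
  conv := convex_segment _ _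
  comp := by
    have : stdSeg j = (fun p : ℝ × ℝ => p.1 • (-(eb j)) + p.2 • eb j) ''
        {p : ℝ × ℝ | 0 ≤ p.1 ∧ 0 ≤ p.2 ∧ p.1 + p.2 = 1} := by
      ext x
      simp only [stdSeg, segment, Set.mem_image, Set.mem_setOf_eq, Prod.exists]
      constructor
      · rintro ⟨a, b, ha, hb, hab, h⟩; exact ⟨a, b, ⟨ha, hb, hab⟩, h⟩
      · rintro ⟨a, b, ⟨ha, hb, hab⟩, h⟩; exact ⟨a, b, ha, hb, hab, h⟩
    rw [this]
    apply IsCompact.image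
    · have : {p : ℝ × ℝ | 0 ≤ p.1 ∧ 0 ≤ p.2 ∧ p.1 + p.2 = 1} ⊆
          Set.Icc (0, 0) (1, 1) := by
        rintro ⟨a, b⟩ ⟨ha, hb, hab⟩
        constructor <;> constructor <;> simp at * <;> linarith
      apply (isCompact_Icc).of_isClosed_subset ?_ this
      apply IsClosed.inter (isClosed_le continuous_const continuous_fst)
      exact IsClosed.inter (isClosed_le continuous_const continuous_snd)
        (isClosed_eq (continuous_fst.add continuous_snd) continuous_const)
    · exact (continuous_fst.smul continuous_const).add (continuous_snd.smul continuous_const)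
  nonempty := ⟨eb j, right_mem_segment _ _ _⟩
  flip := by
    intro s x hx
    rw [mem_stdSeg] at hx ⊢
    refine ⟨?_, fun i hij => ?_⟩
    · rw [flipL_apply]
      rcases hx with ⟨h1, -⟩
      by_cases h : s j <;> simp [h, abs_neg, h1]
    · rw [flipL_apply]
      rcases hx with ⟨-, h2⟩
      by_cases h : s i <;> simp [h, h2 i hij]
  bdd := by
    intro x hx i
    rw [mem_stdSeg] at hx
    by_cases hij : i = j
    · subst hij; exact hx.1
    · rw [hx.2 i hij]; simp
  supp := by
    intro x hx i hi
    rw [mem_stdSeg] at hx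
    have hij : i ≠ j := fun h => hi (by rw [h]; exact eb_mem_stdSeg_iff.mpr rfl)
    exact hx.2 i hij
  key := by
    intro j' hj' x hx hxj i hij hni
    rw [eb_mem_stdSeg_iff] at hj'
    subst hj'
    rw [mem_stdSeg] at hx
    exact hx.2 i hij
lemma mem_l1 {H₁ H₂ : Set (Euc n)} (h₁ : Std H₁) (h₂ : Std H₂) {x : Euc n} :
    x ∈ convexHull ℝ (H₁ ∪ H₂) ↔
      ∃ a ∈ H₁, ∃ b ∈ H₂, ∃ u v : ℝ, 0 ≤ u ∧ 0 ≤ v ∧ u + v = 1 ∧ u • a + v • b = x := by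
  rw [Convex.convexHull_union h₁.conv h₂.conv h₁.nonempty h₂.nonempty, mem_convexJoin]
  constructor
  · rintro ⟨a, ha, b, hb, u, v, hu, hv, huv, hx⟩
    exact ⟨a, ha, b, hb, u, v, hu, hv, huv, hx⟩
  · rintro ⟨a, ha, b, hb, u, v, hu, hv, huv, hx⟩
    exact ⟨a, ha, b, hb, u, v, hu, hv, huv, hx⟩

lemma l1_isCompact {H₁ H₂ : Set (Euc n)} (h₁ : Std H₁) (h₂ : Std H₂) :
    IsCompact (convexHull ℝ (H₁ ∪ H₂)) := by
  have : convexHull ℝ (H₁ ∪ H₂) =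
      (fun p : ℝ × Euc n × Euc n => p.1 • p.2.1 + (1 - p.1) • p.2.2) ''
        (Set.Icc (0:ℝ) 1 ×ˢ (H₁ ×ˢ H₂)) := by
    ext x
    rw [mem_l1 h₁ h₂]
    constructor
    · rintro ⟨a, ha, b, hb, u, v, hu, hv, huv, hx⟩
      exact ⟨⟨u, a, b⟩, ⟨⟨hu, by linarith⟩, ha, hb⟩, by simpa [show 1 - u = v by linarith]⟩
    · rintro ⟨⟨u, a, b⟩, ⟨⟨hu0, hu1⟩, ha, hb⟩, hx⟩
      exact ⟨a, ha, b, hb, u, 1 - u, hu0, by linarith, by ring, hx⟩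
  rw [this]
  exact ((isCompact_Icc.prod (h₁.comp.prod h₂.comp)).image
    (by fun_prop))

lemma l1_vertex {H₁ H₂ : Set (Euc n)} (h₁ : Std H₁) (h₂ : Std H₂) {j : Fin n}
    (hj : eb j ∈ convexHull ℝ (H₁ ∪ H₂)) : eb j ∈ H₁ ∨ eb j ∈ H₂ := by
  by_contra hc
  push_neg at hc
  obtain ⟨a, ha, b, hb, u, v, -, -, -, hx⟩ := (mem_l1 h₁ h₂).mp hj
  have ha' : a j = 0 := h₁.supp a ha j hc.1
  have hb' : b j = 0 := h₂.supp b hb j hc.2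
  have : eb j j = u * a j + v * b j := by rw [← hx]; rfl
  rw [ha', hb', eb_apply_self] at this
  linarith

lemma zero_coord_on_l1 {H₁ H₂ : Set (Euc n)} (h₁ : Std H₁) (h₂ : Std H₂) {j : Fin n}
    (hj2 : eb j ∉ H₂) {x : Euc n} (hx : x ∈ convexHull ℝ (H₁ ∪ H₂)) (hxj : x j = 1) :
    x ∈ H₁ ∧ x j = 1 := by
  obtain ⟨a, ha, b, hb, u, v, hu, hv, huv, hx'⟩ := (mem_l1 h₁ h₂).mp hx
  have hb' : b j = 0 := h₂.supp b hb j hj2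
  have hco : x j = u * a j + v * b j := by rw [← hx']; rfl
  rw [hb'] at hco
  have haj : a j ≤ 1 := (abs_le.mp (h₁.bdd a ha j)).2
  have hu1 : u ≤ 1 := by linarith
  have : u * a j ≤ u := by nlinarith
  have hu' : u = 1 := by nlinarith
  have hv' : v = 0 := by linarith
  have : x = a := by
    rw [← hx', hu', hv']
    ext i
    show 1 * a i + 0 * b i = a i
    ring
  exact ⟨this ▸ ha, hxj⟩

/-- The facet `E_j` of an ℓ1-sum is the facet of the summand containing `e_j`. -/
lemma l1_face {H₁ H₂ : Set (Euc n)} (h₁ : Std H₁) (h₂ : Std H₂) {j : Fin n}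
    (hj2 : eb j ∉ H₂) :
    {x ∈ convexHull ℝ (H₁ ∪ H₂) | x j = 1} = {x ∈ H₁ | x j = 1} := by
  ext x
  constructor
  · rintro ⟨hx, hxj⟩
    exact zero_coord_on_l1 h₁ h₂ hj2 hx hxj
  · rintro ⟨hx, hxj⟩
    exact ⟨subset_convexHull ℝ _ (Or.inl hx), hxj⟩

lemma std_l1 {H₁ H₂ : Set (Euc n)} (h₁ : Std H₁) (h₂ : Std H₂) (hd : Disj H₁ H₂) :
    Std (convexHull ℝ (H₁ ∪ H₂)) := by
  have hkey : ∀ (G₁ G₂ : Set (Euc n)), Std G₁ → Std G₂ → Disj G₁ G₂ →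
      ∀ j, eb j ∈ G₁ → ∀ x ∈ convexHull ℝ (G₁ ∪ G₂), x j = 1 →
      ∀ i, i ≠ j → eb i + eb j ∉ convexHull ℝ (G₁ ∪ G₂) → x i = 0 := by
    intro G₁ G₂ g₁ g₂ gd j hj x hx hxj i hij hni
    have hj2 : eb j ∉ G₂ := fun h => gd j hj h
    have hxG : x ∈ G₁ := (zero_coord_on_l1 g₁ g₂ hj2 hx hxj).1
    by_cases hiG : eb i ∈ G₁
    · exact g₁.key j hj x hxG hxj i hij
        (fun h => hni (subset_convexHull ℝ _ (Or.inl h)))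
    · exact g₁.supp x hxG i hiG
  constructor
  case conv => exact convex_convexHull ℝ _
  case comp => exact l1_isCompact h₁ h₂
  case nonempty => exact h₁.nonempty.mono (subset_trans Set.subset_union_left
    (subset_convexHull ℝ _))
  case flip =>
    intro s x hx
    obtain ⟨a, ha, b, hb, u, v, hu, hv, huv, hx'⟩ := (mem_l1 h₁ h₂).mp hx
    rw [mem_l1 h₁ h₂]
    exact ⟨flipL s a, h₁.flip s a ha, flipL s b, h₂.flip s b hb, u, v, hu, hv, huv,
      by rw [← hx']; simp [map_add, _root_.map_smul]⟩
  case bdd =>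
    intro x hx i
    obtain ⟨a, ha, b, hb, u, v, hu, hv, huv, hx'⟩ := (mem_l1 h₁ h₂).mp hx
    have : x i = u * a i + v * b i := by rw [← hx']; rfl
    rw [this]
    calc |u * a i + v * b i| ≤ |u * a i| + |v * b i| := abs_add_le _ _
      _ = u * |a i| + v * |b i| := by
          rw [abs_mul, abs_mul, abs_of_nonneg hu, abs_of_nonneg hv]
      _ ≤ u * 1 + v * 1 := by
          have := h₁.bdd a ha i; have := h₂.bdd b hb i
          gcongr
      _ = 1 := by linarith
  case supp =>
    intro x hx i hi
    obtain ⟨a, ha, b, hb, u, v, hu, hv, huv, hx'⟩ := (mem_l1 h₁ h₂).mp hx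
    have hi1 : eb i ∉ H₁ := fun h => hi (subset_convexHull ℝ _ (Or.inl h))
    have hi2 : eb i ∉ H₂ := fun h => hi (subset_convexHull ℝ _ (Or.inr h))
    have : x i = u * a i + v * b i := by rw [← hx']; rfl
    rw [this, h₁.supp a ha i hi1, h₂.supp b hb i hi2]
    ring
  case key =>
    intro j hj x hx hxj i hij hni
    rcases l1_vertex h₁ h₂ hj with hj1 | hj2
    · exact hkey H₁ H₂ h₁ h₂ hd j hj1 x hx hxj i hij hni
    · rw [Set.union_comm] at hx hni
      exact hkey H₂ H₁ h₂ h₁ hd.symm j hj2 x hx hxj i hij hni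

lemma linf_vertex {H₁ H₂ : Set (Euc n)} (h₁ : Std H₁) (h₂ : Std H₂) {j : Fin n}
    (hj : eb j ∈ H₁ + H₂) : eb j ∈ H₁ ∨ eb j ∈ H₂ := by
  by_contra hc
  push_neg at hc
  obtain ⟨a, ha, b, hb, hab⟩ := Set.mem_add.mp hj
  have ha' : a j = 0 := h₁.supp a ha j hc.1
  have hb' : b j = 0 := h₂.supp b hb j hc.2
  have : eb j j = a j + b j := by rw [← hab]; rfl
  rw [ha', hb', eb_apply_self] at this
  linarith

/-- The facet `E_j` of an ℓ∞-sum is the sum of the facet and the other summand. -/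
lemma linf_face {H₁ H₂ : Set (Euc n)} (h₁ : Std H₁) (h₂ : Std H₂) {j : Fin n}
    (hj2 : eb j ∉ H₂) :
    {x ∈ H₁ + H₂ | x j = 1} = {x ∈ H₁ | x j = 1} + H₂ := by
  ext x
  constructor
  · rintro ⟨hx, hxj⟩
    obtain ⟨a, ha, b, hb, hab⟩ := Set.mem_add.mp hx
    have hb' : b j = 0 := h₂.supp b hb j hj2
    have haj : a j = 1 := by
      have : x j = a j + b j := by rw [← hab]; rfl
      rw [this, hb'] at hxj; linarith
    exact Set.mem_add.mpr ⟨a, ⟨ha, haj⟩, b, hb, hab⟩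
  · intro hx
    obtain ⟨a, ⟨ha, haj⟩, b, hb, hab⟩ := Set.mem_add.mp hx
    have hb' : b j = 0 := h₂.supp b hb j hj2
    refine ⟨Set.mem_add.mpr ⟨a, ha, b, hb, hab⟩, ?_⟩
    have : x j = a j + b j := by rw [← hab]; rfl
    rw [this, haj, hb']; ring

/-- In an ℓ∞-sum, if `e_i, e_j` both live in `H₁` then `e_i + e_j ∈ H₁ + H₂` forces
`e_i + e_j ∈ H₁`. -/
lemma linf_add_mem_left {H₁ H₂ : Set (Euc n)} (h₁ : Std H₁) (h₂ : Std H₂) (hd : Disj H₁ H₂)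
    {i j : Fin n} (hi : eb i ∈ H₁) (hj : eb j ∈ H₁)
    (hmem : eb i + eb j ∈ H₁ + H₂) : eb i + eb j ∈ H₁ := by
  obtain ⟨a, ha, b, hb, hab⟩ := Set.mem_add.mp hmem
  have hb0 : b = 0 := by
    ext k
    by_cases hk : eb k ∈ H₂
    · have hk1 : eb k ∉ H₁ := fun h => hd k h hk
      have hak : a k = 0 := h₁.supp a ha k hk1
      have hki : k ≠ i := fun h => hk1 (h ▸ hi)
      have hkj : k ≠ j := fun h => hk1 (h ▸ hj)
      have : (eb i + eb j) k = a k + b k := by rw [← hab]; rfl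
      rw [add_apply, eb_apply_ne hki, eb_apply_ne hkj, hak] at this
      show b k = 0
      linarith
    · exact h₂.supp b hb k hk
  rw [hb0, add_zero] at hab
  rwa [← hab]

lemma std_linf {H₁ H₂ : Set (Euc n)} (h₁ : Std H₁) (h₂ : Std H₂) (hd : Disj H₁ H₂) :
    Std (H₁ + H₂) := by
  have memsum : ∀ {G₁ G₂ : Set (Euc n)}, Std G₂ → ∀ x ∈ G₁, x ∈ G₁ + G₂ := by
    intro G₁ G₂ g₂ x hx
    exact Set.mem_add.mpr ⟨x, hx, 0, g₂.zero_mem, add_zero x⟩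
  have hkey : ∀ (G₁ G₂ : Set (Euc n)), Std G₁ → Std G₂ → Disj G₁ G₂ →
      ∀ j, eb j ∈ G₁ → ∀ x ∈ G₁ + G₂, x j = 1 →
      ∀ i, i ≠ j → eb i + eb j ∉ G₁ + G₂ → x i = 0 := by
    intro G₁ G₂ g₁ g₂ gd j hj x hx hxj i hij hni
    have hj2 : eb j ∉ G₂ := fun h => gd j hj h
    obtain ⟨a, ha, b, hb, hab⟩ := Set.mem_add.mp hx
    have hb' : b j = 0 := g₂.supp b hb j hj2
    have haj : a j = 1 := by
      have : x j = a j + b j := by rw [← hab]; rfl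
      rw [this, hb'] at hxj; linarith
    have hxi : x i = a i + b i := by rw [← hab]; rfl
    by_cases hiG : eb i ∈ G₁
    · have hai : a i = 0 := g₁.key j hj a ha haj i hij
        (fun h => hni (memsum g₂ _ h))
      have hbi : b i = 0 := g₂.supp b hb i (fun h => gd i hiG h)
      rw [hxi, hai, hbi]; ring
    · have hai : a i = 0 := g₁.supp a ha i hiG
      have hbi : b i = 0 := by
        refine g₂.supp b hb i (fun h => hni ?_)
        rw [show eb i + eb j = eb j + eb i from add_comm _ _]
        exact Set.mem_add.mpr ⟨eb j, hj, eb i, h, rfl⟩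
      rw [hxi, hai, hbi]; ring
  constructor
  case conv => exact h₁.conv.add h₂.conv
  case comp => exact h₁.comp.add h₂.comp
  case nonempty => exact h₁.nonempty.add h₂.nonempty
  case flip =>
    intro s x hx
    obtain ⟨a, ha, b, hb, hab⟩ := Set.mem_add.mp hx
    exact Set.mem_add.mpr ⟨flipL s a, h₁.flip s a ha, flipL s b, h₂.flip s b hb,
      by rw [← hab, map_add]⟩
  case bdd =>
    intro x hx i
    obtain ⟨a, ha, b, hb, hab⟩ := Set.mem_add.mp hx
    have hxi : x i = a i + b i := by rw [← hab]; rfl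
    by_cases hiG : eb i ∈ H₁
    · have hbi : b i = 0 := h₂.supp b hb i (fun h => hd i hiG h)
      rw [hxi, hbi, add_zero]
      exact h₁.bdd a ha i
    · have hai : a i = 0 := h₁.supp a ha i hiG
      rw [hxi, hai, zero_add]
      exact h₂.bdd b hb i
  case supp =>
    intro x hx i hi
    obtain ⟨a, ha, b, hb, hab⟩ := Set.mem_add.mp hx
    have hxi : x i = a i + b i := by rw [← hab]; rfl
    have hai : a i = 0 := h₁.supp a ha i (fun h => hi (memsum h₂ _ h))
    have hbi : b i = 0 := by
      refine h₂.supp b hb i (fun h => hi ?_)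
      exact Set.mem_add.mpr ⟨0, h₁.zero_mem, eb i, h, zero_add _⟩
    rw [hxi, hai, hbi]; ring
  case key =>
    intro j hj x hx hxj i hij hni
    rcases linf_vertex h₁ h₂ hj with hj1 | hj2
    · exact hkey H₁ H₂ h₁ h₂ hd j hj1 x hx hxj i hij hni
    · rw [show H₁ + H₂ = H₂ + H₁ from add_comm _ _] at hx hni
      exact hkey H₂ H₁ h₂ h₁ hd.symm j hj2 x hx hxj i hij hni


/-- The facet of `H` with centroid `e_j`. -/
def Ej (H : Set (Euc n)) (j : Fin n) : Set (Euc n) :=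
  {x ∈ H | ⟪x, EuclideanSpace.single j (1 : ℝ)⟫ = 1}

lemma Ej_eq (H : Set (Euc n)) (j : Fin n) : Ej H j = {x ∈ H | x j = 1} := by
  ext x
  rw [Ej, Set.mem_setOf_eq, Set.mem_setOf_eq, show EuclideanSpace.single j (1:ℝ) = eb j from rfl,
    inner_eb]

/-- The generating set `{e_i : i ∼ j}`. -/
def genSet (H : Set (Euc n)) (j : Fin n) : Set (Euc n) :=
  {x | ∃ i, i ≠ j ∧ eb i ∈ H ∧ eb i + eb j ∉ H ∧ x = eb i}

def GoodA (H : Set (Euc n)) (A : Set (Euc n) → Set (Euc n)) : Prop :=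
  ∀ j, eb j ∈ H → A (Ej H j) = {eb j} + (span ℝ (genSet H j) : Set (Euc n))

lemma span_eq_span_eb {H : Set (Euc n)} (h : Std H) :
    Submodule.span ℝ H = span ℝ {x : Euc n | ∃ i, eb i ∈ H ∧ x = eb i} := by
  apply le_antisymm
  · rw [Submodule.span_le]
    intro x hx
    exact SetLike.mem_coe.mpr (mem_span_eb.mpr (fun i hi => h.supp x hx i hi))
  · rw [Submodule.span_le]
    rintro x ⟨i, hi, rfl⟩
    exact Submodule.subset_span hi

lemma face_Ej {H : Set (Euc n)} (h : Std H) {j : Fin n} (hj : eb j ∈ H) :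
    IsFaceIn (Submodule.span ℝ H) H (Ej H j) := by
  refine ⟨eb j, 1, Submodule.subset_span hj, eb_ne_zero j, ?_, ⟨eb j, hj, ?_⟩, rfl, ?_⟩
  · intro x hx
    exact le_of_eq_of_le (inner_eb x j) ((abs_le.mp (h.bdd x hx j)).2)
  · exact (inner_eb (eb j) j).trans (eb_apply_self j)
  · intro he
    have hm : -eb j ∈ Ej H j := by rw [he]; exact h.neg_mem hj
    have h2 : (-eb j : Euc n) j = 1 := (inner_eb (-eb j) j).symm.trans hm.2
    rw [neg_apply, eb_apply_self] at h2
    linarith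

lemma singleton_add_coe_add {a : Euc n} (V W : Submodule ℝ (Euc n)) :
    ({a} + (V : Set (Euc n))) + (W : Set (Euc n)) = {a} + ((V ⊔ W : Submodule ℝ (Euc n)) : Set (Euc n)) := by
  rw [add_assoc, ← Submodule.coe_sup]

lemma genSet_l1 {H₁ H₂ : Set (Euc n)} (h₁ : Std H₁) (h₂ : Std H₂) (hd : Disj H₁ H₂)
    {j : Fin n} (hj : eb j ∈ H₁) :
    genSet (convexHull ℝ (H₁ ∪ H₂)) j = genSet H₁ j ∪ {x : Euc n | ∃ i, eb i ∈ H₂ ∧ x = eb i} := by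
  have hj2 : eb j ∉ H₂ := fun h => hd j hj h
  have hsub1 : H₁ ⊆ convexHull ℝ (H₁ ∪ H₂) :=
    subset_trans Set.subset_union_left (subset_convexHull ℝ _)
  have hsub2 : H₂ ⊆ convexHull ℝ (H₁ ∪ H₂) :=
    subset_trans Set.subset_union_right (subset_convexHull ℝ _)
  have hco : ∀ i, i ≠ j → ((eb i + eb j : Euc n)) j = 1 := by
    intro i hij
    rw [add_apply, eb_apply_ne (Ne.symm hij), eb_apply_self]; ring
  ext x
  constructor
  · rintro ⟨i, hij, hiH, hni, rfl⟩
    rcases l1_vertex h₁ h₂ hiH with hi1 | hi2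
    · exact Or.inl ⟨i, hij, hi1, fun hmem => hni (hsub1 hmem), rfl⟩
    · exact Or.inr ⟨i, hi2, rfl⟩
  · rintro (⟨i, hij, hi1, hni1, rfl⟩ | ⟨i, hi2, rfl⟩)
    · refine ⟨i, hij, hsub1 hi1, fun hmem => ?_, rfl⟩
      exact hni1 (zero_coord_on_l1 h₁ h₂ hj2 hmem (hco i hij)).1
    · have hij : i ≠ j := fun h => hd j hj (h ▸ hi2)
      refine ⟨i, hij, hsub2 hi2, fun hmem => ?_, rfl⟩
      have hmem1 : eb i + eb j ∈ H₁ := (zero_coord_on_l1 h₁ h₂ hj2 hmem (hco i hij)).1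
      have hi1 : eb i ∉ H₁ := fun h => hd i h hi2
      have := h₁.supp _ hmem1 i hi1
      rw [add_apply, eb_apply_self, eb_apply_ne hij] at this
      linarith

lemma genSet_linf {H₁ H₂ : Set (Euc n)} (h₁ : Std H₁) (h₂ : Std H₂) (hd : Disj H₁ H₂)
    {j : Fin n} (hj : eb j ∈ H₁) :
    genSet (H₁ + H₂) j = genSet H₁ j := by
  have memsum : ∀ x ∈ H₁, x ∈ H₁ + H₂ :=
    fun x hx => Set.mem_add.mpr ⟨x, hx, 0, h₂.zero_mem, add_zero x⟩
  ext x
  constructor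
  · rintro ⟨i, hij, hiH, hni, rfl⟩
    rcases linf_vertex h₁ h₂ hiH with hi1 | hi2
    · exact ⟨i, hij, hi1, fun hmem => hni (memsum _ hmem), rfl⟩
    · exact absurd (Set.mem_add.mpr ⟨eb j, hj, eb i, hi2, add_comm (eb j) (eb i)⟩) hni
  · rintro ⟨i, hij, hi1, hni1, rfl⟩
    exact ⟨i, hij, memsum _ hi1, fun hmem =>
      hni1 (linf_add_mem_left h₁ h₂ hd hi1 hj hmem), rfl⟩

lemma goodA_l1_half {H₁ H₂ : Set (Euc n)} {A A₁ : Set (Euc n) → Set (Euc n)}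
    (h₁ : Std H₁) (h₂ : Std H₂) (hd : Disj H₁ H₂) (g₁ : GoodA H₁ A₁)
    (rule : ∀ F₁, IsFaceIn (Submodule.span ℝ H₁) H₁ F₁ →
      A F₁ = A₁ F₁ + (Submodule.span ℝ H₂ : Set (Euc n)))
    {j : Fin n} (hj : eb j ∈ H₁) :
    A (Ej (convexHull ℝ (H₁ ∪ H₂)) j) =
      {eb j} + (span ℝ (genSet (convexHull ℝ (H₁ ∪ H₂)) j) : Set (Euc n)) := by
  have hj2 : eb j ∉ H₂ := fun h => hd j hj h
  have hEj : Ej (convexHull ℝ (H₁ ∪ H₂)) j = Ej H₁ j := by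
    rw [Ej_eq, Ej_eq, l1_face h₁ h₂ hj2]
  rw [hEj, rule _ (face_Ej h₁ hj), g₁ j hj, span_eq_span_eb h₂, singleton_add_coe_add,
    ← Submodule.span_union, genSet_l1 h₁ h₂ hd hj]

lemma goodA_l1 {H₁ H₂ : Set (Euc n)} {A A₁ A₂ : Set (Euc n) → Set (Euc n)}
    (h₁ : Std H₁) (h₂ : Std H₂) (hd : Disj H₁ H₂) (g₁ : GoodA H₁ A₁) (g₂ : GoodA H₂ A₂)
    (hr : L1Rules H₁ H₂ A₁ A₂ A) : GoodA (convexHull ℝ (H₁ ∪ H₂)) A := by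
  intro j hj
  rcases l1_vertex h₁ h₂ hj with hj1 | hj2
  · exact goodA_l1_half h₁ h₂ hd g₁ hr.1 hj1
  · rw [Set.union_comm]
    refine goodA_l1_half h₂ h₁ hd.symm g₂ ?_ hj2
    intro F₂ hF₂
    rw [hr.2.1 F₂ hF₂, add_comm]

lemma goodA_linf_half {H₁ H₂ : Set (Euc n)} {A A₁ : Set (Euc n) → Set (Euc n)}
    (h₁ : Std H₁) (h₂ : Std H₂) (hd : Disj H₁ H₂) (g₁ : GoodA H₁ A₁)
    (rule : ∀ F₁, IsFaceIn (Submodule.span ℝ H₁) H₁ F₁ → A (F₁ + H₂) = A₁ F₁)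
    {j : Fin n} (hj : eb j ∈ H₁) :
    A (Ej (H₁ + H₂) j) = {eb j} + (span ℝ (genSet (H₁ + H₂) j) : Set (Euc n)) := by
  have hj2 : eb j ∉ H₂ := fun h => hd j hj h
  have hEj : Ej (H₁ + H₂) j = Ej H₁ j + H₂ := by
    rw [Ej_eq, Ej_eq, linf_face h₁ h₂ hj2]
  rw [hEj, rule _ (face_Ej h₁ hj), g₁ j hj, genSet_linf h₁ h₂ hd hj]

lemma goodA_linf {H₁ H₂ : Set (Euc n)} {A A₁ A₂ : Set (Euc n) → Set (Euc n)}
    (h₁ : Std H₁) (h₂ : Std H₂) (hd : Disj H₁ H₂) (g₁ : GoodA H₁ A₁) (g₂ : GoodA H₂ A₂)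
    (hr : LInfRules H₁ H₂ A₁ A₂ A) : GoodA (H₁ + H₂) A := by
  intro j hj
  rcases linf_vertex h₁ h₂ hj with hj1 | hj2
  · exact goodA_linf_half h₁ h₂ hd g₁ hr.1 hj1
  · rw [show H₁ + H₂ = H₂ + H₁ from add_comm _ _]
    refine goodA_linf_half h₂ h₁ hd.symm g₂ ?_ hj2
    intro F₂ hF₂
    rw [show F₂ + H₁ = H₁ + F₂ from add_comm _ _, hr.2.1 F₂ hF₂]

lemma goodA_seg {A : Set (Euc n) → Set (Euc n)} (j : Fin n)
    (hA1 : A {EuclideanSpace.single j (1 : ℝ)} = {EuclideanSpace.single j (1 : ℝ)}) :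
    GoodA (stdSeg j) A := by
  intro j' hj'
  have hjj : j' = j := eb_mem_stdSeg_iff.mp hj'
  subst hjj
  have hEj : Ej (stdSeg j') j' = {eb j'} := by
    rw [Ej_eq]
    ext x
    constructor
    · rintro ⟨hx, hxj⟩
      rw [mem_stdSeg] at hx
      have : x = eb j' := by
        ext i
        by_cases hij : i = j'
        · subst hij; rw [hxj, eb_apply_self]
        · rw [hx.2 i hij, eb_apply_ne hij]
      exact this
    · rintro rfl
      exact ⟨eb_mem_stdSeg_iff.mpr rfl, eb_apply_self j'⟩
  have hgen : genSet (stdSeg j') j' = ∅ := by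
    ext x
    simp only [genSet, Set.mem_setOf_eq, Set.mem_empty_iff_false, iff_false]
    rintro ⟨i, hij, hi, -, rfl⟩
    exact hij (eb_mem_stdSeg_iff.mp hi)
  rw [hEj, hgen, show ({eb j'} : Set (Euc n)) = {EuclideanSpace.single j' (1:ℝ)} from rfl, hA1,
    Submodule.span_empty, Submodule.bot_coe, Set.add_singleton]
  simp

lemma IsFaceIn.mono {V W : Submodule ℝ (Euc n)} {P F : Set (Euc n)} (hVW : V ≤ W)
    (h : IsFaceIn V P F) : IsFaceIn W P F := by
  obtain ⟨u, b, hu, h2, h3, h4, h5, h6⟩ := h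
  exact ⟨u, b, hVW hu, h2, h3, h4, h5, h6⟩

lemma all_mem {H : Set (Euc n)} (h : Std H) (hspan : Submodule.span ℝ H = ⊤) (i : Fin n) :
    eb i ∈ H := by
  by_contra hi
  have hle : Submodule.span ℝ H ≤ LinearMap.ker (EuclideanSpace.projₗ (𝕜 := ℝ) i) :=
    Submodule.span_le.mpr (fun x hx => LinearMap.mem_ker.mpr (h.supp x hx i hi))
  rw [hspan] at hle
  have hm : eb i ∈ LinearMap.ker (EuclideanSpace.projₗ (𝕜 := ℝ) i) := hle Submodule.mem_top
  have h1 : (eb i) i = 0 := hm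
  rw [eb_apply_self] at h1
  exact one_ne_zero h1

lemma eb_mem_Ej {H : Set (Euc n)} {j : Fin n} (hj : eb j ∈ H) : eb j ∈ Ej H j :=
  ⟨hj, (inner_eb (eb j) j).trans (eb_apply_self j)⟩

lemma mem_Ej_iff {H : Set (Euc n)} {j : Fin n} {x : Euc n} :
    x ∈ Ej H j ↔ x ∈ H ∧ x j = 1 := by rw [Ej_eq]; rfl

/-- Conjunct 3: the affine hull of the facet `E_j`. -/
lemma affineSpan_Ej {H : Set (Euc n)} (h : Std H) (hspan : Submodule.span ℝ H = ⊤) (j : Fin n) :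
    (affineSpan ℝ (Ej H j) : Set (Euc n)) =
      {eb j} + (Submodule.span ℝ {x : Euc n | ∃ i : Fin n, i ≠ j ∧
        eb i + eb j ∈ H ∧ x = eb i} : Set (Euc n)) := by
  set W : Submodule ℝ (Euc n) :=
    Submodule.span ℝ {x : Euc n | ∃ i : Fin n, i ≠ j ∧ eb i + eb j ∈ H ∧ x = eb i} with hW
  have hWset : {x : Euc n | ∃ i : Fin n, i ≠ j ∧ eb i + eb j ∈ H ∧ x = eb i} =
      {x : Euc n | ∃ i : Fin n, (i ≠ j ∧ eb i + eb j ∈ H) ∧ x = eb i} := by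
    ext x; simp only [Set.mem_setOf_eq]; tauto
  have hjH : eb j ∈ H := all_mem h hspan j
  have hsub : Ej H j ⊆ ((AffineSubspace.mk' (eb j) W : AffineSubspace ℝ (Euc n)) : Set (Euc n)) := by
    intro x hx
    rw [SetLike.mem_coe, AffineSubspace.mem_mk']
    rw [mem_Ej_iff] at hx
    show x - eb j ∈ W
    rw [hW, hWset]
    refine mem_span_eb.mpr (fun i hi => ?_)
    push_neg at hi
    rw [sub_apply]
    by_cases hij : i = j
    · subst hij; rw [hx.2, eb_apply_self]; ring
    · rw [eb_apply_ne hij, h.key j hjH x hx.1 hx.2 i hij (hi hij)]; ring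
  have hle : affineSpan ℝ (Ej H j) ≤ AffineSubspace.mk' (eb j) W :=
    affineSpan_le.mpr hsub
  have hge : ((AffineSubspace.mk' (eb j) W : AffineSubspace ℝ (Euc n)) : Set (Euc n)) ⊆
      (affineSpan ℝ (Ej H j) : Set (Euc n)) := by
    intro x hx
    rw [SetLike.mem_coe, AffineSubspace.mem_mk'] at hx
    have hdir : W ≤ (affineSpan ℝ (Ej H j)).direction := by
      rw [hW, Submodule.span_le]
      rintro y ⟨i, hij, hmem, rfl⟩
      have h1 : eb i + eb j ∈ Ej H j := by
        rw [mem_Ej_iff]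
        refine ⟨hmem, ?_⟩
        rw [add_apply, eb_apply_ne (Ne.symm hij), eb_apply_self]; ring
      have h2 : eb j ∈ Ej H j := eb_mem_Ej hjH
      have := AffineSubspace.vsub_mem_direction (subset_affineSpan ℝ _ h1)
        (subset_affineSpan ℝ _ h2)
      simpa using this
    have hx' : (x - eb j) +ᵥ eb j ∈ affineSpan ℝ (Ej H j) :=
      AffineSubspace.vadd_mem_of_mem_direction (hdir hx)
        (subset_affineSpan ℝ _ (eb_mem_Ej hjH))
    simpa using hx'
  have hco : (affineSpan ℝ (Ej H j) : Set (Euc n)) =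
      ((AffineSubspace.mk' (eb j) W : AffineSubspace ℝ (Euc n)) : Set (Euc n)) :=
    le_antisymm hle hge
  rw [hco]
  ext x
  rw [SetLike.mem_coe, AffineSubspace.mem_mk', Set.mem_add]
  constructor
  · intro hx
    exact ⟨eb j, rfl, x - eb j, hx, by abel⟩
  · rintro ⟨a, ha, w, hw, rfl⟩
    rw [Set.mem_singleton_iff] at ha
    subst ha
    simpa using hw

lemma coord_abs_le_norm {ι : Type*} [Fintype ι] (y : EuclideanSpace ℝ ι) (k : ι) :
    |y k| ≤ ‖y‖ := by
  have h1 : |y k| = Real.sqrt (‖y k‖ ^ 2) := by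
    rw [Real.sqrt_sq_eq_abs]; simp
  rw [h1, EuclideanSpace.norm_eq]
  apply Real.sqrt_le_sqrt
  exact Finset.single_le_sum (fun i _ => sq_nonneg (‖y i‖)) (Finset.mem_univ k)

/-- Abstract computation of the barycentre of an isometric copy of a symmetric body. -/
lemma abstract_centroid {ι : Type*} [Fintype ι] (φL : EuclideanSpace ℝ ι →ₗ[ℝ] Euc n)
    (c : Euc n) (E : Set (Euc n)) (hiso : Isometry (fun y => c + φL y))
    (hE : (fun y => c + φL y) '' ((fun y : EuclideanSpace ℝ ι => c + φL y) ⁻¹' E) = E)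
    (hsymm : ∀ y, c + φL y ∈ E → c + φL (-y) ∈ E)
    (hcl : IsClosed ((fun y : EuclideanSpace ℝ ι => c + φL y) ⁻¹' E))
    {C : ℝ} (hbdd : ∀ y ∈ (fun y : EuclideanSpace ℝ ι => c + φL y) ⁻¹' E, ‖y‖ ≤ C)
    {r : ℝ} (hr : 0 < r)
    (hball : Metric.ball (0 : EuclideanSpace ℝ ι) r ⊆ (fun y : EuclideanSpace ℝ ι => c + φL y) ⁻¹' E)
    {d : ℕ} (hd : d = Fintype.card ι) :
    μH[(d : ℝ)] E ≠ 0 ∧ μH[(d : ℝ)] E ≠ ⊤ ∧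
      ((μH[(d : ℝ)] E).toReal)⁻¹ • (∫ x in E, x ∂(μH[(d : ℝ)])) = c := by
  set ψ : EuclideanSpace ℝ ι → Euc n := fun y => c + φL y with hψ
  set K : Set (EuclideanSpace ℝ ι) := ψ ⁻¹' E with hK
  set μT : Measure (EuclideanSpace ℝ ι) := μH[(d : ℝ)] with hμT
  have hψmeas : Measurable ψ := hiso.continuous.measurable
  have hKmeas : MeasurableSet K := hcl.measurableSet
  have hKsymm : ∀ y, y ∈ K ↔ -y ∈ K := by
    intro y
    constructor
    · intro hy; exact hsymm y hy
    · intro hy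
      have := hsymm (-y) hy
      rwa [neg_neg] at this
  -- positivity and finiteness of μT K
  have hface : (0 : ℝ) ≤ (d : ℝ) := Nat.cast_nonneg d
  have hlip : LipschitzWith 1 (⇑(WithLp.equiv 2 (ι → ℝ))) := PiLp.lipschitzWith_ofLp 2 _
  have halip : AntilipschitzWith ((Fintype.card ι : ℝ≥0) ^ ((1 : ℝ≥0∞) / 2).toReal)
      (⇑(WithLp.equiv 2 (ι → ℝ))) := PiLp.antilipschitzWith_ofLp 2 _
  have hpi : (μH[(d : ℝ)] : Measure (ι → ℝ)) = volume := by
    rw [hd]; exact hausdorffMeasure_pi_real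
  set f : EuclideanSpace ℝ ι → (ι → ℝ) := ⇑(WithLp.equiv 2 (ι → ℝ)) with hf
  have hKbounded : Bornology.IsBounded K := isBounded_iff_forall_norm_le.mpr ⟨C, hbdd⟩
  have hKcomp : IsCompact K := Metric.isCompact_of_isClosed_isBounded hcl hKbounded
  have hKpos : 0 < μT K := by
    have h1 : μH[(d : ℝ)] (f '' Metric.ball 0 r) ≤ μT (Metric.ball 0 r) := by
      have := hlip.hausdorffMeasure_image_le hface (Metric.ball (0 : EuclideanSpace ℝ ι) r)
      simpa using this
    have hopen : IsOpen (f '' Metric.ball 0 r) := by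
      rw [Equiv.image_eq_preimage_symm]
      exact Metric.isOpen_ball.preimage (PiLp.continuous_toLp 2 (fun _ : ι => ℝ))
    have hne : (f '' Metric.ball 0 r).Nonempty :=
      ⟨f 0, Set.mem_image_of_mem f (Metric.mem_ball_self hr)⟩
    have hpos : 0 < μH[(d : ℝ)] (f '' Metric.ball 0 r) := by
      rw [hpi]
      exact hopen.measure_pos volume hne
    calc (0 : ℝ≥0∞) < μH[(d : ℝ)] (f '' Metric.ball 0 r) := hpos
      _ ≤ μT (Metric.ball 0 r) := h1
      _ ≤ μT K := measure_mono hball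
  have hKfin : μT K < ⊤ := by
    have h2 := halip.le_hausdorffMeasure_image hface K
    have hcomp : IsCompact (f '' K) := hKcomp.image hlip.continuous
    have hfin : μH[(d : ℝ)] (f '' K) < ⊤ := by
      rw [hpi]; exact hcomp.measure_lt_top
    calc μT K ≤ _ := h2
      _ < ⊤ := ENNReal.mul_lt_top (ENNReal.rpow_lt_top_of_nonneg hface ENNReal.coe_ne_top) hfin
  set ν : Measure (EuclideanSpace ℝ ι) := μT.restrict K with hν
  haveI : IsFiniteMeasure ν := ⟨by rw [hν, Measure.restrict_apply_univ]; exact hKfin⟩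
  have hmapneg : Measure.map (fun y : EuclideanSpace ℝ ι => -y) μT = μT := by
    have h := ((LinearIsometryEquiv.neg ℝ
      (E := EuclideanSpace ℝ ι)).toIsometryEquiv).map_hausdorffMeasure (d : ℝ)
    rwa [show ⇑(LinearIsometryEquiv.neg ℝ (E := EuclideanSpace ℝ ι)).toIsometryEquiv =
      fun y : EuclideanSpace ℝ ι => -y from rfl] at h
  have hnegK : (fun y : EuclideanSpace ℝ ι => -y) ⁻¹' K = K := by
    ext y
    simp only [Set.mem_preimage]
    exact (hKsymm y).symm
  have hmapν : Measure.map (fun y : EuclideanSpace ℝ ι => -y) ν = ν := by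
    rw [hν]
    calc Measure.map (fun y : EuclideanSpace ℝ ι => -y) (μT.restrict K)
        = Measure.map (fun y : EuclideanSpace ℝ ι => -y)
            (μT.restrict ((fun y : EuclideanSpace ℝ ι => -y) ⁻¹' K)) := by rw [hnegK]
      _ = (Measure.map (fun y : EuclideanSpace ℝ ι => -y) μT).restrict K :=
          (Measure.restrict_map measurable_neg hKmeas).symm
      _ = μT.restrict K := by rw [hmapneg]
  have hI : ∫ y, y ∂ν = 0 := by
    have h1 : ∫ y, y ∂ν = ∫ y, -y ∂ν := by
      conv_lhs => rw [← hmapν]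
      rw [integral_map (f := fun y : EuclideanSpace ℝ ι => y) measurable_neg.aemeasurable
        aestronglyMeasurable_id]
    have h3 : (∫ y, y ∂ν) + (∫ y, y ∂ν) = 0 := by
      nth_rewrite 2 [h1]
      rw [integral_neg]
      abel
    have h4 : ∫ y, y ∂ν = (2 : ℝ)⁻¹ • ((∫ y, y ∂ν) + (∫ y, y ∂ν)) := by
      rw [← two_smul ℝ, inv_smul_smul₀ two_ne_zero]
    rw [h4, h3, smul_zero]
  have hEmeas_img : ∀ s : Set (EuclideanSpace ℝ ι), μH[(d : ℝ)] (ψ '' s) = μT s :=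
    fun s => hiso.hausdorffMeasure_image (Or.inl hface) s
  have hmap : Measure.map ψ ν = (μH[(d : ℝ)] : Measure (Euc n)).restrict E := by
    refine Measure.ext (fun A hA => ?_)
    rw [Measure.map_apply hψmeas hA, Measure.restrict_apply hA, hν,
      Measure.restrict_apply (hψmeas hA), ← hEmeas_img (ψ ⁻¹' A ∩ K)]
    congr 1
    rw [Set.inter_comm (ψ ⁻¹' A) K, Set.image_inter_preimage, hE, Set.inter_comm]
  have hμE : μH[(d : ℝ)] E = μT K := by rw [← hE, hEmeas_img]
  have hInt : Integrable (fun y : EuclideanSpace ℝ ι => y) ν := by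
    refine Integrable.mono' (integrable_const C) aestronglyMeasurable_id ?_
    rw [hν]
    exact (ae_restrict_iff' hKmeas).mpr (ae_of_all _ (fun y hy => hbdd y hy))
  set φC : EuclideanSpace ℝ ι →L[ℝ] Euc n := LinearMap.toContinuousLinearMap φL with hφC
  have hIntφ : Integrable (fun y => φC y) ν := φC.integrable_comp hInt
  have hsum : ∫ x in E, x ∂(μH[(d : ℝ)]) = (μT K).toReal • c := by
    rw [← hmap, integral_map (f := fun x : Euc n => x) hψmeas.aemeasurable
      aestronglyMeasurable_id]
    calc ∫ y, ψ y ∂ν = ∫ y, (c + φC y) ∂ν := rfl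
      _ = (∫ _, c ∂ν) + ∫ y, φC y ∂ν := integral_add (integrable_const c) hIntφ
      _ = (ν Set.univ).toReal • c + φC (∫ y, y ∂ν) := by
          rw [integral_const, φC.integral_comp_comm hInt]; rfl
      _ = (μT K).toReal • c := by
          rw [hI, map_zero, add_zero, hν, Measure.restrict_apply_univ]
  have h0 : μH[(d : ℝ)] E ≠ 0 := by rw [hμE]; exact hKpos.ne'
  have hT : μH[(d : ℝ)] E ≠ ⊤ := by rw [hμE]; exact hKfin.ne
  refine ⟨h0, hT, ?_⟩
  rw [hsum, hμE, smul_smul, inv_mul_cancel₀, one_smul]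
  exact ENNReal.toReal_ne_zero.mpr ⟨hKpos.ne', hKfin.ne⟩


/-- The canonical isometric embedding of `EuclideanSpace ℝ T` as the coordinate subspace. -/
def sumMap (T : Finset (Fin n)) : EuclideanSpace ℝ {i // i ∈ T} →ₗ[ℝ] Euc n where
  toFun y := ∑ k : {i // i ∈ T}, y k • eb (k : Fin n)
  map_add' y z := by
    rw [← Finset.sum_add_distrib]
    refine Finset.sum_congr rfl (fun k _ => ?_)
    show ((y + z) k) • eb (k : Fin n) = y k • eb (k : Fin n) + z k • eb (k : Fin n)
    rw [show (y + z) k = y k + z k from rfl, add_smul]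
  map_smul' c y := by
    rw [RingHom.id_apply, Finset.smul_sum]
    refine Finset.sum_congr rfl (fun k _ => ?_)
    show ((c • y) k) • eb (k : Fin n) = c • (y k • eb (k : Fin n))
    rw [show (c • y) k = c * y k from rfl, smul_smul]

lemma sumMap_apply (T : Finset (Fin n)) (y : EuclideanSpace ℝ {i // i ∈ T}) (i : Fin n) :
    sumMap T y i = if h : i ∈ T then y ⟨i, h⟩ else 0 := by
  have h1 : sumMap T y i = ∑ k : {i // i ∈ T}, y k * eb (k : Fin n) i := by
    rw [show sumMap T y = ∑ k : {i // i ∈ T}, y k • eb (k : Fin n) from rfl, sum_apply]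
    exact Finset.sum_congr rfl (fun k _ => rfl)
  rw [h1]
  by_cases h : i ∈ T
  · rw [dif_pos h]
    rw [Finset.sum_eq_single_of_mem (⟨i, h⟩ : {i // i ∈ T}) (Finset.mem_univ _)]
    · rw [eb_apply_self]; ring
    · intro k _ hk
      have : i ≠ (k : Fin n) := fun he => hk (Subtype.ext he.symm)
      rw [eb_apply_ne this]; ring
  · rw [dif_neg h]
    refine Finset.sum_eq_zero (fun k _ => ?_)
    have : i ≠ (k : Fin n) := fun he => h (he ▸ k.2)
    rw [eb_apply_ne this]; ring

lemma sumMap_norm (T : Finset (Fin n)) (y : EuclideanSpace ℝ {i // i ∈ T}) :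
    ‖sumMap T y‖ = ‖y‖ := by
  rw [EuclideanSpace.norm_eq, EuclideanSpace.norm_eq]
  congr 1
  have h1 : ∀ i ∈ Finset.univ \ T, ‖sumMap T y i‖ ^ 2 = 0 := by
    intro i hi
    rw [Finset.mem_sdiff] at hi
    rw [sumMap_apply, dif_neg hi.2]
    simp
  calc ∑ i : Fin n, ‖sumMap T y i‖ ^ 2 = ∑ i ∈ T, ‖sumMap T y i‖ ^ 2 :=
      (Finset.sum_subset (Finset.subset_univ T)
        (fun i _ hi => by rw [sumMap_apply, dif_neg hi]; simp)).symm
    _ = ∑ k : {i // i ∈ T}, ‖sumMap T y (k : Fin n)‖ ^ 2 := (Finset.sum_coe_sort T _).symm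
    _ = ∑ k : {i // i ∈ T}, ‖y k‖ ^ 2 := by
        refine Finset.sum_congr rfl (fun k _ => ?_)
        rw [sumMap_apply, dif_pos k.2, Subtype.coe_eta]

lemma norm_le_of_std {H : Set (Euc n)} (h : Std H) {x : Euc n} (hx : x ∈ H) :
    ‖x‖ ≤ Real.sqrt n := by
  rw [EuclideanSpace.norm_eq]
  have h1 : ∑ i : Fin n, ‖x i‖ ^ 2 ≤ (n : ℝ) := by
    calc ∑ i : Fin n, ‖x i‖ ^ 2 ≤ ∑ _i : Fin n, (1 : ℝ) := by
          refine Finset.sum_le_sum (fun i _ => ?_)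
          have := h.bdd x hx i
          rw [Real.norm_eq_abs]
          nlinarith [abs_nonneg (x i)]
      _ = (n : ℝ) := by simp
  exact Real.sqrt_le_sqrt h1

/-- Conjunct 2: the centroid of the facet `E_j` is `e_j`. -/
lemma centroid_Ej {H : Set (Euc n)} (h : Std H) (hspan : Submodule.span ℝ H = ⊤) (j : Fin n) :
    centroid (Ej H j) = eb j := by
  classical
  have hjH : eb j ∈ H := all_mem h hspan j
  set T : Finset (Fin n) := Finset.univ.filter (fun i : Fin n => i ≠ j ∧ eb i + eb j ∈ H)
    with hT
  have hT_mem : ∀ i, i ∈ T ↔ (i ≠ j ∧ eb i + eb j ∈ H) := by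
    intro i; rw [hT, Finset.mem_filter]; simp
  set φL := sumMap T with hφL
  set ψ : EuclideanSpace ℝ {i // i ∈ T} → Euc n := fun y => eb j + φL y with hψdef
  have hiso : Isometry ψ := by
    refine Isometry.of_dist_eq (fun a b => ?_)
    rw [dist_eq_norm, dist_eq_norm, hψdef]
    have : (eb j + φL a) - (eb j + φL b) = φL (a - b) := by rw [map_sub]; abel
    rw [this, hφL, sumMap_norm]
  have hψj : ∀ y, ψ y j = 1 := by
    intro y
    rw [hψdef]
    have hjT : j ∉ T := fun hc => ((hT_mem j).mp hc).1 rfl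
    show eb j j + φL y j = 1
    rw [eb_apply_self, hφL, sumMap_apply, dif_neg hjT]; ring
  -- membership of small cross-polytope combinations
  have hcross : ∀ y : EuclideanSpace ℝ {i // i ∈ T}, (∑ k, |y k|) ≤ 1 → ψ y ∈ H := by
    intro y hy
    set s : {i // i ∈ T} → Euc n := fun k => if 0 ≤ y k then eb (k : Fin n) else -eb (k : Fin n)
      with hs
    set w : Option {i // i ∈ T} → ℝ := fun o => o.elim (1 - ∑ k, |y k|) (fun k => |y k|) with hw
    set z : Option {i // i ∈ T} → Euc n := fun o => o.elim (eb j) (fun k => eb j + s k) with hz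
    have hnon : ∀ o ∈ (Finset.univ : Finset (Option {i // i ∈ T})), 0 ≤ w o := by
      rintro (_ | k) -
      · show 0 ≤ 1 - ∑ k, |y k|; linarith
      · exact abs_nonneg _
    have hsum1 : ∑ o : Option {i // i ∈ T}, w o = 1 := by
      rw [Fintype.sum_option]
      show (1 - ∑ k, |y k|) + ∑ k, |y k| = 1
      ring
    have hmem : ∀ o ∈ (Finset.univ : Finset (Option {i // i ∈ T})), z o ∈ H := by
      rintro (_ | k) -
      · exact hjH
      · show eb j + s k ∈ H
        obtain ⟨hkj, hkmem⟩ := (hT_mem (k : Fin n)).mp k.2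
        by_cases h0 : 0 ≤ y k
        · rw [hs]; simp only [if_pos h0]
          rw [add_comm]; exact hkmem
        · rw [hs]; simp only [if_neg h0]
          have h2 := h.sub_mem_of_add_mem hkj hkmem
          rwa [show eb j + -eb (k : Fin n) = eb j - eb (k : Fin n) from (sub_eq_add_neg _ _).symm]
    have hC := h.conv.sum_mem hnon hsum1 hmem
    have hkey : ∑ o : Option {i // i ∈ T}, w o • z o = ψ y := by
      rw [Fintype.sum_option]
      have h1 : ∀ k : {i // i ∈ T}, w (some k) • z (some k) = |y k| • eb j + y k • eb (k : Fin n) := by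
        intro k
        show |y k| • (eb j + s k) = _
        by_cases h0 : 0 ≤ y k
        · rw [hs]; simp only [if_pos h0, smul_add, abs_of_nonneg h0]
        · rw [hs]; simp only [if_neg h0, smul_add, abs_of_neg (lt_of_not_ge h0)]
          rw [smul_neg, ← neg_smul, neg_neg]
      calc w none • z none + ∑ k, w (some k) • z (some k)
          = (1 - ∑ k, |y k|) • eb j + ∑ k, (|y k| • eb j + y k • eb (k : Fin n)) := by
            rw [Finset.sum_congr rfl (fun k _ => h1 k)]
            rfl
        _ = (1 - ∑ k, |y k|) • eb j + ((∑ k, |y k|) • eb j + ∑ k, y k • eb (k : Fin n)) := by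
            rw [Finset.sum_add_distrib, ← Finset.sum_smul]
        _ = eb j + ∑ k, y k • eb (k : Fin n) := by
            rw [sub_smul, one_smul]; abel
        _ = ψ y := rfl
    rwa [hkey] at hC
  -- E is contained in the range of ψ
  have hrange : Ej H j ⊆ Set.range ψ := by
    intro x hx
    rw [mem_Ej_iff] at hx
    refine ⟨WithLp.toLp 2 (fun k => x (k : Fin n)), ?_⟩
    rw [hψdef]
    ext i
    show eb j i + φL _ i = x i
    rw [hφL, sumMap_apply]
    by_cases hiT : i ∈ T
    · have hij : i ≠ j := ((hT_mem i).mp hiT).1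
      rw [dif_pos hiT, eb_apply_ne hij]; ring
    · rw [dif_neg hiT]
      by_cases hij : i = j
      · subst hij; rw [eb_apply_self, hx.2]; ring
      · have hni : eb i + eb j ∉ H := fun hc => hiT ((hT_mem i).mpr ⟨hij, hc⟩)
        rw [eb_apply_ne hij, h.key j hjH x hx.1 hx.2 i hij hni]; ring
  have hE : ψ '' (ψ ⁻¹' Ej H j) = Ej H j := Set.image_preimage_eq_of_subset hrange
  have hsymm : ∀ y, eb j + φL y ∈ Ej H j → eb j + φL (-y) ∈ Ej H j := by
    intro y hy
    rw [mem_Ej_iff] at hy ⊢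
    have hrefl : (2 : ℝ) • eb j - (eb j + φL y) ∈ H := h.reflect_mem hy.1 hy.2
    have heq : eb j + φL (-y) = (2 : ℝ) • eb j - (eb j + φL y) := by
      rw [map_neg]
      ext i
      show eb j i + -(φL y i) = 2 * eb j i - (eb j i + φL y i)
      ring
    refine ⟨by rw [heq]; exact hrefl, hψj (-y)⟩
  have hEcl : IsClosed (Ej H j) := by
    rw [Ej_eq]
    have : {x ∈ H | x j = 1} = H ∩ (fun x : Euc n => x j) ⁻¹' {1} := by
      ext x; simp [Set.mem_preimage]
    rw [this]
    exact h.comp.isClosed.inter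
      (IsClosed.preimage (EuclideanSpace.proj (𝕜 := ℝ) j).continuous isClosed_singleton)
  have hcl : IsClosed (ψ ⁻¹' Ej H j) := hEcl.preimage hiso.continuous
  have hbdd : ∀ y ∈ ψ ⁻¹' Ej H j, ‖y‖ ≤ Real.sqrt n + 1 := by
    intro y hy
    have h1 : ‖y‖ = ‖φL y‖ := by rw [hφL, sumMap_norm]
    have h2 : φL y = ψ y - eb j := by
      show φL y = (eb j + φL y) - eb j
      rw [add_sub_cancel_left]
    have h3 : ‖ψ y‖ ≤ Real.sqrt n := norm_le_of_std h (Set.mem_preimage.mp hy).1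
    have h4 : ‖(eb j : Euc n)‖ = 1 := by
      rw [show (eb j : Euc n) = EuclideanSpace.single j (1:ℝ) from rfl,
        EuclideanSpace.norm_single]
      norm_num
    calc ‖y‖ = ‖ψ y - eb j‖ := by rw [h1, h2]
      _ ≤ ‖ψ y‖ + ‖(eb j : Euc n)‖ := norm_sub_le _ _
      _ ≤ Real.sqrt n + 1 := by rw [h4]; linarith
  have hball : Metric.ball (0 : EuclideanSpace ℝ {i // i ∈ T}) (1 / (n + 1)) ⊆
      ψ ⁻¹' Ej H j := by
    intro y hy
    rw [Metric.mem_ball, dist_zero_right] at hy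
    have hyn : ‖y‖ ≤ 1 / (n + 1) := le_of_lt hy
    have hsumy : (∑ k, |y k|) ≤ 1 := by
      have h5 : (∑ k, |y k|) ≤ ∑ _k : {i // i ∈ T}, ‖y‖ :=
        Finset.sum_le_sum (fun k _ => coord_abs_le_norm y k)
      have h6 : (∑ _k : {i // i ∈ T}, ‖y‖) = (T.card : ℝ) * ‖y‖ := by
        rw [Finset.sum_const, Finset.card_univ, Fintype.card_coe, nsmul_eq_mul]
      have h7 : (T.card : ℝ) ≤ (n : ℝ) := by
        have hc : T.card ≤ n := by simpa using Finset.card_le_univ T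
        exact_mod_cast hc
      have h8 : (0 : ℝ) < (n : ℝ) + 1 := by positivity
      have h9 : (T.card : ℝ) * ‖y‖ ≤ (n : ℝ) * (1 / (n + 1)) := by
        apply mul_le_mul h7 hyn (norm_nonneg y) (Nat.cast_nonneg n)
      have h10 : (n : ℝ) * (1 / (n + 1)) ≤ 1 := by
        rw [mul_one_div, div_le_one h8]; linarith
      linarith
    rw [Set.mem_preimage, mem_Ej_iff]
    exact ⟨hcross y hsumy, hψj y⟩
  -- dimension computation
  have hsd : setDim (Ej H j) = T.card := by
    set v : {i // i ∈ T} → Euc n := fun k => eb (k : Fin n) with hv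
    have horth : Orthonormal ℝ v := by
      rw [orthonormal_iff_ite]
      intro k l
      rw [hv]
      have : ⟪(eb (k : Fin n) : Euc n), eb (l : Fin n)⟫ = eb (k : Fin n) (l : Fin n) := by
        exact inner_eb _ _
      rw [this, eb_apply]
      by_cases hkl : k = l
      · subst hkl; simp
      · rw [if_neg (fun hc => hkl (Subtype.ext hc.symm)), if_neg hkl]
    have hrange_v : Set.range v = {x : Euc n | ∃ i, i ∈ T ∧ x = eb i} := by
      ext x
      constructor
      · rintro ⟨k, rfl⟩; exact ⟨k, k.2, rfl⟩
      · rintro ⟨i, hi, rfl⟩; exact ⟨⟨i, hi⟩, rfl⟩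
    have hspanv : Submodule.span ℝ (Set.range v) = Submodule.span ℝ (Ej H j - Ej H j) := by
      apply le_antisymm
      · rw [Submodule.span_le]
        rintro x ⟨k, rfl⟩
        obtain ⟨hkj, hkmem⟩ := (hT_mem (k : Fin n)).mp k.2
        have h1 : eb (k : Fin n) + eb j ∈ Ej H j := by
          rw [mem_Ej_iff]
          exact ⟨hkmem, by rw [add_apply, eb_apply_ne (Ne.symm hkj), eb_apply_self]; ring⟩
        have h2 : (eb (k : Fin n) + eb j) - eb j ∈ Ej H j - Ej H j :=
          Set.sub_mem_sub h1 (eb_mem_Ej hjH)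
        rw [add_sub_cancel_right] at h2
        exact Submodule.subset_span h2
      · rw [Submodule.span_le]
        rintro z ⟨x, hx, y, hy, rfl⟩
        rw [mem_Ej_iff] at hx hy
        rw [SetLike.mem_coe, hrange_v]
        have hP : {x : Euc n | ∃ i, i ∈ T ∧ x = eb i} =
            {x : Euc n | ∃ i, (i ∈ T) ∧ x = eb i} := rfl
        rw [hP]
        refine mem_span_eb.mpr (fun i hi => ?_)
        show x i - y i = 0
        by_cases hij : i = j
        · subst hij; rw [hx.2, hy.2]; ring
        · have hni : eb i + eb j ∉ H := fun hc => hi ((hT_mem i).mpr ⟨hij, hc⟩)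
          rw [h.key j hjH x hx.1 hx.2 i hij hni, h.key j hjH y hy.1 hy.2 i hij hni]; ring
    have hdim0 : setDim (Ej H j) =
        Module.finrank ℝ (Submodule.span ℝ (Ej H j - Ej H j) : Submodule ℝ (Euc n)) := rfl
    rw [hdim0, ← hspanv, finrank_span_eq_card horth.linearIndependent, Fintype.card_coe]
  obtain ⟨h0, hfin, heq⟩ := abstract_centroid φL (eb j) (Ej H j) hiso hE hsymm hcl hbdd
    (by positivity : (0 : ℝ) < 1 / (n + 1)) hball (d := T.card) (Fintype.card_coe T).symm
  have hsd' : (setDim (Ej H j) : ℝ) = (T.card : ℝ) := by rw [hsd]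
  show ((μH[(setDim (Ej H j) : ℝ)] (Ej H j)).toReal)⁻¹ •
    (∫ x in Ej H j, x ∂(μH[(setDim (Ej H j) : ℝ)])) = eb j
  rw [hsd']
  exact heq

/-- The master structural lemma, proved by induction on the Hanner representation. -/
theorem master {H H' : Set (Euc n)} {A A' : Set (Euc n) → Set (Euc n)}
    (h : StdHannerRep H A H' A') :
    (Std H ∧ GoodA H A) ∧ (Std H' ∧ GoodA H' A') := by
  induction h with
  | seg j B B' hA1 hA2 hA'1 hA'2 =>
    exact ⟨⟨std_stdSeg j, goodA_seg j hA1⟩, ⟨std_stdSeg j, goodA_seg j hA'1⟩⟩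
  | l1 h₁ h₂ hspan hA hA' ih₁ ih₂ =>
    obtain ⟨⟨s₁, g₁⟩, ⟨s₁', g₁'⟩⟩ := ih₁
    obtain ⟨⟨s₂, g₂⟩, ⟨s₂', g₂'⟩⟩ := ih₂
    have hd : Disj _ _ := disj_of_span_inf hspan (Set.subset_union_left) (Set.subset_union_left)
    have hd' : Disj _ _ := disj_of_span_inf hspan (Set.subset_union_right) (Set.subset_union_right)
    exact ⟨⟨std_l1 s₁ s₂ hd, goodA_l1 s₁ s₂ hd g₁ g₂ hA⟩,
      ⟨std_linf s₁' s₂' hd', goodA_linf s₁' s₂' hd' g₁' g₂' hA'⟩⟩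
  | linf h₁ h₂ hspan hA hA' ih₁ ih₂ =>
    obtain ⟨⟨s₁, g₁⟩, ⟨s₁', g₁'⟩⟩ := ih₁
    obtain ⟨⟨s₂, g₂⟩, ⟨s₂', g₂'⟩⟩ := ih₂
    have hd : Disj _ _ := disj_of_span_inf hspan (Set.subset_union_left) (Set.subset_union_left)
    have hd' : Disj _ _ := disj_of_span_inf hspan (Set.subset_union_right) (Set.subset_union_right)
    exact ⟨⟨std_linf s₁ s₂ hd, goodA_linf s₁ s₂ hd g₁ g₂ hA⟩,
      ⟨std_l1 s₁' s₂' hd', goodA_l1 s₁' s₂' hd' g₁' g₂' hA'⟩⟩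

end HannerAux
end

/-- **Lemma 6.2.** For a standard Hanner polytope `H` and `E_j = H ∩ (e_j + e_j^⊥)` (a face
of `H` with centroid `e_j`), the affine hull of `E_j` is `e_j + span{e_i : i ≁ j}` and the
associated affine subspace is `A_{E_j} = e_j + span{e_i : i ∼ j}`, where `i ∼ j` means
`e_i + e_j ∉ H`. -/
theorem aff_and_subspace_of_facet_Ej (n : ℕ) (H H' : Set (Euc n))
    (A A' : Set (Euc n) → Set (Euc n)) (hH : StdHannerRep H A H' A')
    (hspan : Submodule.span ℝ H = ⊤) (j : Fin n) :
    IsFaceOf H {x ∈ H | ⟪x, EuclideanSpace.single j (1 : ℝ)⟫ = 1} ∧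
    centroid {x ∈ H | ⟪x, EuclideanSpace.single j (1 : ℝ)⟫ = 1} =
      EuclideanSpace.single j (1 : ℝ) ∧
    (affineSpan ℝ {x ∈ H | ⟪x, EuclideanSpace.single j (1 : ℝ)⟫ = 1} : Set (Euc n)) =
      {EuclideanSpace.single j (1 : ℝ)} +
        (Submodule.span ℝ {x : Euc n | ∃ i : Fin n, i ≠ j ∧
          EuclideanSpace.single i (1 : ℝ) + EuclideanSpace.single j (1 : ℝ) ∈ H ∧
          x = EuclideanSpace.single i (1 : ℝ)} : Set (Euc n)) ∧
    A {x ∈ H | ⟪x, EuclideanSpace.single j (1 : ℝ)⟫ = 1} =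
      {EuclideanSpace.single j (1 : ℝ)} +
        (Submodule.span ℝ {x : Euc n | ∃ i : Fin n, i ≠ j ∧
          EuclideanSpace.single i (1 : ℝ) + EuclideanSpace.single j (1 : ℝ) ∉ H ∧
          x = EuclideanSpace.single i (1 : ℝ)} : Set (Euc n)) := by
  obtain ⟨⟨hStd, hGood⟩, -⟩ := HannerAux.master hH
  have hjH : HannerAux.eb j ∈ H := HannerAux.all_mem hStd hspan j
  refine ⟨?_, ?_, ?_, ?_⟩
  · exact HannerAux.IsFaceIn.mono le_top (HannerAux.face_Ej hStd hjH)
  · exact HannerAux.centroid_Ej hStd hspan j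
  · exact HannerAux.affineSpan_Ej hStd hspan j
  · have h4 := hGood j hjH
    have hset : HannerAux.genSet H j = {x : Euc n | ∃ i : Fin n, i ≠ j ∧
        EuclideanSpace.single i (1 : ℝ) + EuclideanSpace.single j (1 : ℝ) ∉ H ∧
        x = EuclideanSpace.single i (1 : ℝ)} := by
      ext x
      constructor
      · rintro ⟨i, hij, -, hni, rfl⟩; exact ⟨i, hij, hni, rfl⟩
      · rintro ⟨i, hij, hni, rfl⟩
        exact ⟨i, hij, HannerAux.all_mem hStd hspan i, hni, rfl⟩
    rw [← hset]
    exact h4
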